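/- Let C_P = C_1 ⊗ C_2 with C_i an [n_i, k_i]_q code of rate R_i = k_i/n_i, where (n_i − k_i) divides n_i and M divides N^c = (n_1/(n_1−k_1))·(n_2/(n_2−k_2)). If min(R_1, R_2) ≤ 1 − 1/M, then the compact graph admits a balanced M-coloring φ with ρ_max(φ) = 1, i.e., every super-edge has rootcheck order 1. -/

import Mathlib

/-- Counting: blocks of `N` consecutive cells (row-major) form classes of size `N`. -/
private lemma aux_count (a b N : ℕ) (hN : 0 < N) (i : ℕ)
    (hib : (i + 1) * N ≤ a * b) :
    (Finset.univ.filter fun e : Fin a × Fin b =>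
      ((e.2 : ℕ) + b * (e.1 : ℕ)) / N = i).card = N := by
  have hab : 0 < a * b := lt_of_lt_of_le (by nlinarith) hib
  have hb : 0 < b := by
    rcases Nat.eq_zero_or_pos b with h | h
    · simp [h] at hab
    · exact h
  have ha : 0 < a := by
    rcases Nat.eq_zero_or_pos a with h | h
    · simp [h] at hab
    · exact h
  have hcard : (Finset.univ.filter fun e : Fin a × Fin b =>
      ((e.2 : ℕ) + b * (e.1 : ℕ)) / N = i).card
      = (Finset.Ico (i * N) (i * N + N)).card := by
    refine Finset.card_nbij' (fun e => ((e.2 : ℕ) + b * (e.1 : ℕ)))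
      (fun x => ((⟨x / b % a, Nat.mod_lt _ ha⟩ : Fin a), (⟨x % b, Nat.mod_lt _ hb⟩ : Fin b)))
      ?_ ?_ ?_ ?_
    · intro e he
      simp only [Finset.mem_coe, Finset.mem_filter, Finset.mem_univ, true_and] at he
      have h1 := Nat.div_add_mod ((e.2 : ℕ) + b * (e.1 : ℕ)) N
      rw [he] at h1
      have h2 := Nat.mod_lt ((e.2 : ℕ) + b * (e.1 : ℕ)) hN
      simp only [Finset.mem_coe, Finset.mem_Ico, mul_comm i N]
      omega
    · intro x hx
      simp only [Finset.mem_coe, Finset.mem_Ico] at hx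
      have hsucc : (i + 1) * N = i * N + N := by ring
      rw [hsucc] at hib
      have hxlt : x < a * b := by omega
      have hdb : x / b < a := (Nat.div_lt_iff_lt_mul hb).2 (by
        rw [mul_comm a b] at hxlt; omega)
      simp only [Finset.mem_coe, Finset.mem_filter, Finset.mem_univ, true_and]
      rw [Nat.mod_eq_of_lt hdb, Nat.mod_add_div]
      exact Nat.div_eq_of_lt_le (by omega) (by omega)
    · intro e he
      have h1 : ((e.2 : ℕ) + b * (e.1 : ℕ)) / b = (e.1 : ℕ) := by
        rw [Nat.add_mul_div_left _ _ hb, Nat.div_eq_of_lt e.2.isLt, zero_add]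
      have h2 : ((e.2 : ℕ) + b * (e.1 : ℕ)) % b = (e.2 : ℕ) := by
        rw [Nat.add_mul_mod_self_left, Nat.mod_eq_of_lt e.2.isLt]
      ext
      · simp [h1, Nat.mod_eq_of_lt e.1.isLt]
      · simp [h2]
    · intro x hx
      simp only [Finset.mem_coe, Finset.mem_Ico] at hx
      have hsucc : (i + 1) * N = i * N + N := by ring
      rw [hsucc] at hib
      have hxlt : x < a * b := by omega
      have hdb : x / b < a := (Nat.div_lt_iff_lt_mul hb).2 (by
        rw [mul_comm a b] at hxlt; omega)
      show x % b + b * (x / b % a) = x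
      rw [Nat.mod_eq_of_lt hdb, Nat.mod_add_div]
  rw [hcard]
  simp

/-- Swap version of the counting lemma. -/
private lemma aux_count' (a b N : ℕ) (hN : 0 < N) (i : ℕ)
    (hib : (i + 1) * N ≤ b * a) :
    (Finset.univ.filter fun e : Fin a × Fin b =>
      ((e.1 : ℕ) + a * (e.2 : ℕ)) / N = i).card = N := by
  rw [show (Finset.univ.filter fun e : Fin a × Fin b =>
      ((e.1 : ℕ) + a * (e.2 : ℕ)) / N = i).card
    = (Finset.univ.filter fun e : Fin b × Fin a =>
      ((e.2 : ℕ) + a * (e.1 : ℕ)) / N = i).card from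
    Finset.card_nbij' Prod.swap Prod.swap (by intro e he; simpa using he)
      (by intro e he; simpa using he) (by intro e _; simp) (by intro e _; simp)]
  exact aux_count b a N hN i hib

/-- The rate condition `k/n ≤ 1 - 1/M` forces `n/(n-k) ≤ M`. -/
private lemma rate_le (n k M : ℕ) (hM : 0 < M) (hk : k < n)
    (h : (k : ℚ) / n ≤ 1 - 1 / M) : n / (n - k) ≤ M := by
  have hn : (0 : ℚ) < n := by exact_mod_cast (by omega : 0 < n)
  have hMq : (0 : ℚ) < M := by exact_mod_cast hM
  have h2 : (n : ℚ) ≤ M * ((n : ℚ) - k) := by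
    rw [div_le_iff₀ hn] at h
    have hexp : (1 - 1 / (M : ℚ)) * n = n - n / M := by field_simp
    rw [hexp] at h
    have h3 : (n : ℚ) / M ≤ (n : ℚ) - k := by linarith
    calc (n : ℚ) = M * ((n : ℚ) / M) := by field_simp
      _ ≤ M * ((n : ℚ) - k) := by
          exact mul_le_mul_of_nonneg_left h3 hMq.le
  have h3 : n ≤ M * (n - k) := by
    have : ((n : ℕ) : ℚ) ≤ ((M * (n - k) : ℕ) : ℚ) := by
      push_cast [Nat.cast_sub hk.le]
      linarith
    exact_mod_cast this
  calc n / (n - k) ≤ M * (n - k) / (n - k) := Nat.div_le_div_right h3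
    _ = M := Nat.mul_div_cancel M (by omega)

/-- Lemma rho=1: for a product code `C₁[n₁,k₁] ⊗ C₂[n₂,k₂]` with
`(nᵢ−kᵢ) ∣ nᵢ` and `M` dividing the number `N^c` of super-edges of the compact
graph (the complete bipartite graph on `n₁/(n₁−k₁)` left and `n₂/(n₂−k₂)` right
vertices), if `min(R₁, R₂) ≤ 1 − 1/M` then the compact graph admits a balanced
`M`-coloring in which every super-edge has rootcheck order 1 (i.e. every edge
has a neighboring vertex at which no other incident edge shares its color). -/
theorem exists_balanced_coloring_rho_eq_one
    (n₁ k₁ n₂ k₂ M : ℕ) (hM : 0 < M)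
    (hk₁ : k₁ < n₁) (hk₂ : k₂ < n₂)
    (hdvd₁ : (n₁ - k₁) ∣ n₁) (hdvd₂ : (n₂ - k₂) ∣ n₂)
    (hMdvd : M ∣ n₁ / (n₁ - k₁) * (n₂ / (n₂ - k₂)))
    (hrate : min ((k₁ : ℚ) / n₁) ((k₂ : ℚ) / n₂) ≤ 1 - 1 / M) :
    ∃ φ : Fin (n₁ / (n₁ - k₁)) × Fin (n₂ / (n₂ - k₂)) → Fin M,
      (∀ i : Fin M, (Finset.univ.filter fun e => φ e = i).card
          = n₁ / (n₁ - k₁) * (n₂ / (n₂ - k₂)) / M) ∧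
      ∀ e, (∀ f, f.1 = e.1 → f ≠ e → φ f ≠ φ e) ∨
           (∀ f, f.2 = e.2 → f ≠ e → φ f ≠ φ e) := by
  have hd₁ : 0 < n₁ - k₁ := by omega
  have hd₂ : 0 < n₂ - k₂ := by omega
  set a := n₁ / (n₁ - k₁) with ha_def
  set b := n₂ / (n₂ - k₂) with hb_def
  have ha1 : 0 < a := Nat.div_pos (Nat.le_of_dvd (by omega) hdvd₁) hd₁
  have hb1 : 0 < b := Nat.div_pos (Nat.le_of_dvd (by omega) hdvd₂) hd₂
  obtain ⟨N, hNdef⟩ := hMdvd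
  have hN : 0 < N := by
    have h0 := Nat.mul_pos ha1 hb1
    rcases Nat.eq_zero_or_pos N with h | h
    · rw [h, mul_zero] at hNdef; omega
    · exact h
  have key : a ≤ M ∨ b ≤ M := by
    rcases min_le_iff.mp hrate with h | h
    · exact Or.inl (rate_le n₁ k₁ M hM hk₁ h)
    · exact Or.inr (rate_le n₂ k₂ M hM hk₂ h)
  rcases key with hA | hB
  · -- `a ≤ M`, so `N ≤ b`; row-major coloring, uniqueness in columns
    have hNb : N ≤ b := by
      have h1 : M * N ≤ M * b := by
        rw [← hNdef]
        exact Nat.mul_le_mul hA le_rfl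
      exact Nat.le_of_mul_le_mul_left h1 hM
    refine ⟨fun e => ⟨((e.2 : ℕ) + b * (e.1 : ℕ)) / N, ?_⟩, ?_, ?_⟩
    · have hlt : (e.2 : ℕ) + b * (e.1 : ℕ) < a * b := by
        have h1 : b * ((e.1 : ℕ) + 1) ≤ b * a := Nat.mul_le_mul le_rfl e.1.isLt
        have h2 := e.2.isLt
        rw [mul_add, mul_one] at h1
        have h3 : b * a = a * b := mul_comm b a
        omega
      rw [hNdef] at hlt
      exact (Nat.div_lt_iff_lt_mul hN).2 hlt
    · intro i
      have hdiv : a * b / M = N := by rw [hNdef]; exact Nat.mul_div_cancel_left N hM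
      rw [hdiv]
      have hc := aux_count a b N hN i.val (by
        rw [hNdef]
        exact Nat.mul_le_mul i.isLt le_rfl)
      refine Eq.trans ?_ hc
      congr 1
      ext e
      simp [Fin.ext_iff]
    · intro e
      right
      intro f hf2 hfe hcol
      have hval := congrArg Fin.val hcol
      simp only at hval
      have hv2 : (f.2 : ℕ) = (e.2 : ℕ) := congrArg Fin.val hf2
      have hf1 : (f.1 : ℕ) ≠ (e.1 : ℕ) := by
        intro h
        exact hfe (Prod.ext (Fin.ext h) hf2)
      rw [hv2] at hval
      have claim : ∀ u v c : ℕ, u < v → (c + b * u) / N < (c + b * v) / N := by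
        intro u v c huv
        have h1 : b * (u + 1) ≤ b * v := Nat.mul_le_mul le_rfl huv
        rw [mul_add, mul_one] at h1
        have h2 : (c + b * u + N) / N ≤ (c + b * v) / N :=
          Nat.div_le_div_right (by omega)
        rw [Nat.add_div_right _ hN] at h2
        omega
      rcases lt_or_gt_of_ne hf1 with h | h
      · exact absurd hval (Nat.ne_of_lt (claim _ _ _ h))
      · exact absurd hval.symm (Nat.ne_of_lt (claim _ _ _ h))
  · -- `b ≤ M`, so `N ≤ a`; column-major coloring, uniqueness in rows
    have hNa : N ≤ a := by
      have h1 : M * N ≤ M * a := by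
        rw [← hNdef, mul_comm M a]
        exact Nat.mul_le_mul le_rfl hB
      exact Nat.le_of_mul_le_mul_left h1 hM
    refine ⟨fun e => ⟨((e.1 : ℕ) + a * (e.2 : ℕ)) / N, ?_⟩, ?_, ?_⟩
    · have hlt : (e.1 : ℕ) + a * (e.2 : ℕ) < a * b := by
        have h1 : a * ((e.2 : ℕ) + 1) ≤ a * b := Nat.mul_le_mul le_rfl e.2.isLt
        have h2 := e.1.isLt
        rw [mul_add, mul_one] at h1
        omega
      rw [hNdef] at hlt
      exact (Nat.div_lt_iff_lt_mul hN).2 hlt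
    · intro i
      have hdiv : a * b / M = N := by rw [hNdef]; exact Nat.mul_div_cancel_left N hM
      rw [hdiv]
      have hc := aux_count' a b N hN i.val (by
        rw [mul_comm b a, hNdef]
        exact Nat.mul_le_mul i.isLt le_rfl)
      refine Eq.trans ?_ hc
      congr 1
      ext e
      simp [Fin.ext_iff]
    · intro e
      left
      intro f hf1 hfe hcol
      have hval := congrArg Fin.val hcol
      simp only at hval
      have hv1 : (f.1 : ℕ) = (e.1 : ℕ) := congrArg Fin.val hf1
      have hf2 : (f.2 : ℕ) ≠ (e.2 : ℕ) := by
        intro h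
        exact hfe (Prod.ext hf1 (Fin.ext h))
      rw [hv1] at hval
      have claim : ∀ u v c : ℕ, u < v → (c + a * u) / N < (c + a * v) / N := by
        intro u v c huv
        have h1 : a * (u + 1) ≤ a * v := Nat.mul_le_mul le_rfl huv
        rw [mul_add, mul_one] at h1
        have h2 : (c + a * u + N) / N ≤ (c + a * v) / N :=
          Nat.div_le_div_right (by omega)
        rw [Nat.add_div_right _ hN] at h2
        omega
      rcases lt_or_gt_of_ne hf2 with h | h
      · exact absurd hval (Nat.ne_of_lt (claim _ _ _ h))
      · exact absurd hval.symm (Nat.ne_of_lt (claim _ _ _ h))
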